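/- Let (A, C, λ) be an entwining in a monoidal category V, and suppose the entwining is representable: there is an object E and a morphism β : E ⊗ C → A such that for every object V' and every morphism f : V' ⊗ C → A there exists a unique g : V' → E with (g ⊗ id_C) ≫ β = f. Let e_E : 𝟙 → E be the unique morphism with (e_E ⊗ id_C) ≫ β = e_A ∘ ε_C (composed with the unit isomorphism), and let m_E : E ⊗ E → E be the unique morphism with (m_E ⊗ id_C) ≫ β = m_A ∘ (β ⊗ A) ∘ (E ⊗ λ) ∘ (E ⊗ β ⊗ C) ∘ (E ⊗ E ⊗ δ_C). Then (E, m_E, e_E) is a monoid in V: m_E ∘ (m_E ⊗ E) = m_E ∘ (E ⊗ m_E) and m_E ∘ (e_E ⊗ E) = id_E = m_E ∘ (E ⊗ e_E) (up to the unit isomorphisms). -/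

import Mathlib

open CategoryTheory MonoidalCategory

universe v u

variable {V : Type u} [Category.{v} V] [MonoidalCategory V]

/-- **Proposition 6.3(i).** Let `(A, C, λ)` be an entwining in a monoidal category `V`,
and suppose it is representable, with representing object `E` and structural
morphism `β : E ⊗ C ⟶ A` (so every `f : V' ⊗ C ⟶ A` factors uniquely through
`β` via some `g : V' ⟶ E`).  Let `e_E : 𝟙 ⟶ E` be the unique morphism with
`(e_E ⊗ C) ≫ β = e_A ∘ ε_C` and `m_E : E ⊗ E ⟶ E` the unique morphism with
`(m_E ⊗ C) ≫ β = m_A ∘ (β ⊗ A) ∘ (E ⊗ λ) ∘ (E ⊗ β ⊗ C) ∘ (E ⊗ E ⊗ δ_C)`.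
Then `(E, m_E, e_E)` is a monoid in `V`. -/
theorem representable_entwining_monoid
    (M : Mon V) (Cn : Comon V) (lam : M.X ⊗ Cn.X ⟶ Cn.X ⊗ M.X)
    (e₁ : (λ_ Cn.X).inv ≫ (M.mon.one ▷ Cn.X) ≫ lam = (ρ_ Cn.X).inv ≫ (Cn.X ◁ M.mon.one))
    (e₂ : lam ≫ (Cn.comon.counit ▷ M.X) ≫ (λ_ M.X).hom = (M.X ◁ Cn.comon.counit) ≫ (ρ_ M.X).hom)
    (e₃ : (M.X ◁ Cn.comon.comul) ≫ (α_ M.X Cn.X Cn.X).inv ≫ (lam ▷ Cn.X) ≫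
        (α_ Cn.X M.X Cn.X).hom ≫ (Cn.X ◁ lam) =
      lam ≫ (Cn.comon.comul ▷ M.X) ≫ (α_ Cn.X Cn.X M.X).hom)
    (e₄ : (M.mon.mul ▷ Cn.X) ≫ lam =
      (α_ M.X M.X Cn.X).hom ≫ (M.X ◁ lam) ≫ (α_ M.X Cn.X M.X).inv ≫
        (lam ▷ M.X) ≫ (α_ Cn.X M.X M.X).hom ≫ (Cn.X ◁ M.mon.mul))
    (E : V) (β : E ⊗ Cn.X ⟶ M.X)
    (hrep : ∀ (W : V) (f : W ⊗ Cn.X ⟶ M.X), ∃! g : W ⟶ E, (g ▷ Cn.X) ≫ β = f)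
    (eE : 𝟙_ V ⟶ E)
    (heE : (eE ▷ Cn.X) ≫ β = (λ_ Cn.X).hom ≫ Cn.comon.counit ≫ M.mon.one)
    (mE : E ⊗ E ⟶ E)
    (hmE : (mE ▷ Cn.X) ≫ β =
      (α_ E E Cn.X).hom ≫ (E ◁ (E ◁ Cn.comon.comul)) ≫ (E ◁ (α_ E Cn.X Cn.X).inv) ≫
        (E ◁ (β ▷ Cn.X)) ≫ (E ◁ lam) ≫ (α_ E Cn.X M.X).inv ≫
          (β ▷ M.X) ≫ M.mon.mul) :
    (mE ▷ E) ≫ mE = (α_ E E E).hom ≫ (E ◁ mE) ≫ mE ∧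
    (eE ▷ E) ≫ mE = (λ_ E).hom ∧
    (E ◁ eE) ≫ mE = (ρ_ E).hom := by
  have inj : ∀ {W : V} (f g : W ⟶ E), (f ▷ Cn.X) ≫ β = (g ▷ Cn.X) ≫ β → f = g := by
    intro W f g h
    obtain ⟨u, -, hu⟩ := hrep W ((g ▷ Cn.X) ≫ β)
    rw [hu f h, hu g rfl]
  refine ⟨?_, ?_, ?_⟩
  · -- associativity
    apply inj
    rw [comp_whiskerRight, comp_whiskerRight, comp_whiskerRight, Category.assoc,
      Category.assoc, Category.assoc, hmE]
    -- LHS processing: move mE through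
    rw [associator_naturality_left_assoc, ← whisker_exchange_assoc, ← whisker_exchange_assoc,
      ← whisker_exchange_assoc, ← whisker_exchange_assoc,
      associator_inv_naturality_left_assoc, ← comp_whiskerRight_assoc, hmE]
    -- RHS processing
    have hB : (mE ▷ Cn.X) ≫ (E ◁ Cn.comon.comul) ≫ (α_ E Cn.X Cn.X).inv ≫ (β ▷ Cn.X) ≫ lam =
        ((E ⊗ E) ◁ Cn.comon.comul) ≫ (α_ (E ⊗ E) Cn.X Cn.X).inv ≫
          (((α_ E E Cn.X).hom ≫ (E ◁ (E ◁ Cn.comon.comul)) ≫ (E ◁ (α_ E Cn.X Cn.X).inv) ≫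
            (E ◁ (β ▷ Cn.X)) ≫ (E ◁ lam) ≫ (α_ E Cn.X M.X).inv ≫ (β ▷ M.X)) ▷ Cn.X) ≫
          (α_ M.X M.X Cn.X).hom ≫ (M.X ◁ lam) ≫ (α_ M.X Cn.X M.X).inv ≫
            (lam ▷ M.X) ≫ (α_ Cn.X M.X M.X).hom ≫ (Cn.X ◁ M.mon.mul) := by
      rw [← whisker_exchange_assoc, associator_inv_naturality_left_assoc,
        ← comp_whiskerRight_assoc, hmE]
      simp only [comp_whiskerRight, Category.assoc]
      rw [e₄]
    conv_rhs => rw [associator_naturality_middle_assoc,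
      ← MonoidalCategory.whiskerLeft_comp_assoc, ← MonoidalCategory.whiskerLeft_comp_assoc,
      ← MonoidalCategory.whiskerLeft_comp_assoc, ← MonoidalCategory.whiskerLeft_comp_assoc]
    conv_rhs => simp only [Category.assoc]
    rw [hB]
    simp only [MonoidalCategory.whiskerLeft_comp, comp_whiskerRight, Category.assoc]
    -- tail of LHS
    rw [MonObj.mul_assoc M.X, associator_naturality_left_assoc]
    -- tail of RHS
    conv_rhs => rw [associator_inv_naturality_right_assoc, whisker_exchange_assoc]
    -- key lemma from e₃
    have hK : ((E ◁ Cn.comon.comul) ≫ (α_ E Cn.X Cn.X).inv ≫ (β ▷ Cn.X) ≫ lam) ≫ (Cn.comon.comul ▷ M.X) =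
        (E ◁ Cn.comon.comul) ≫ (α_ E Cn.X Cn.X).inv ≫ ((E ⊗ Cn.X) ◁ Cn.comon.comul) ≫
          (α_ (E ⊗ Cn.X) Cn.X Cn.X).inv ≫ ((β ▷ Cn.X) ▷ Cn.X) ≫ (lam ▷ Cn.X) ≫
          (α_ Cn.X M.X Cn.X).hom ≫ (Cn.X ◁ lam) ≫ (α_ Cn.X Cn.X M.X).inv := by
      have he₃ : lam ≫ (Cn.comon.comul ▷ M.X) = (M.X ◁ Cn.comon.comul) ≫ (α_ M.X Cn.X Cn.X).inv ≫
          (lam ▷ Cn.X) ≫ (α_ Cn.X M.X Cn.X).hom ≫ (Cn.X ◁ lam) ≫ (α_ Cn.X Cn.X M.X).inv := by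
        rw [← cancel_mono (α_ Cn.X Cn.X M.X).hom]
        simp only [Category.assoc, Iso.inv_hom_id, Category.comp_id]
        exact e₃.symm
      rw [Category.assoc, Category.assoc, Category.assoc, he₃,
        ← whisker_exchange_assoc, associator_inv_naturality_left_assoc]
    -- reposition δ₂ on LHS (coherence)
    have cohL1 : (α_ (E ⊗ E) Cn.X M.X).inv ≫ ((α_ E E Cn.X).hom ▷ M.X) ≫
        ((E ◁ (E ◁ Cn.comon.comul)) ▷ M.X) =
        ((E ⊗ E) ◁ (Cn.comon.comul ▷ M.X)) ≫ (α_ (E ⊗ E) (Cn.X ⊗ Cn.X) M.X).inv ≫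
          ((α_ E E (Cn.X ⊗ Cn.X)).hom ▷ M.X) := by monoidal
    rw [reassoc_of% cohL1]
    have hK2 := congrArg (fun t => (E ⊗ E) ◁ t) hK
    simp only [MonoidalCategory.whiskerLeft_comp, Category.assoc] at hK2
    rw [reassoc_of% hK2]
    have hδδ : (E ◁ Cn.comon.comul) ≫ (α_ E Cn.X Cn.X).inv ≫ ((E ⊗ Cn.X) ◁ Cn.comon.comul) =
        (E ◁ Cn.comon.comul) ≫ (E ◁ (Cn.comon.comul ▷ Cn.X)) ≫ (E ◁ (α_ Cn.X Cn.X Cn.X).hom) ≫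
          (α_ E Cn.X (Cn.X ⊗ Cn.X)).inv := by
      rw [← associator_inv_naturality_right, ← MonoidalCategory.whiskerLeft_comp_assoc,
        ComonObj.comul_assoc Cn.X]
      simp only [MonoidalCategory.whiskerLeft_comp, Category.assoc]
    have hδδ2 := congrArg (fun t => (E ⊗ E) ◁ t) hδδ
    simp only [MonoidalCategory.whiskerLeft_comp, Category.assoc] at hδδ2
    rw [reassoc_of% hδδ2]
    have step1 :
        ((E ⊗ E) ◁ (Cn.X ◁ lam)) ≫ ((E ⊗ E) ◁ (α_ Cn.X Cn.X M.X).inv) ≫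
          (α_ (E ⊗ E) (Cn.X ⊗ Cn.X) M.X).inv ≫ ((α_ E E (Cn.X ⊗ Cn.X)).hom ▷ M.X) ≫
          ((E ◁ (α_ E Cn.X Cn.X).inv) ▷ M.X) ≫ ((E ◁ (β ▷ Cn.X)) ▷ M.X) ≫
          ((E ◁ lam) ▷ M.X) ≫ ((α_ E Cn.X M.X).inv ▷ M.X) ≫
          (α_ (E ⊗ Cn.X) M.X M.X).hom ≫ (β ▷ (M.X ⊗ M.X)) ≫ (M.X ◁ M.mon.mul) ≫ M.mon.mul
        = (α_ (E ⊗ E) Cn.X (M.X ⊗ Cn.X)).inv ≫ (((E ⊗ E) ⊗ Cn.X) ◁ lam) ≫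
          (((α_ E E Cn.X).hom ≫ (E ◁ β)) ▷ (Cn.X ⊗ M.X)) ≫ (α_ E M.X (Cn.X ⊗ M.X)).hom ≫
          (E ◁ (α_ M.X Cn.X M.X).inv) ≫ (E ◁ (lam ▷ M.X)) ≫ (E ◁ (α_ Cn.X M.X M.X).hom) ≫
          (α_ E Cn.X (M.X ⊗ M.X)).inv ≫ (β ▷ (M.X ⊗ M.X)) ≫ (M.X ◁ M.mon.mul) ≫ M.mon.mul := by
      monoidal
    rw [step1, whisker_exchange_assoc]
    monoidal
  · -- left unit
    apply inj
    rw [comp_whiskerRight, Category.assoc, hmE]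
    rw [associator_naturality_left_assoc]
    rw [← whisker_exchange_assoc, ← whisker_exchange_assoc, ← whisker_exchange_assoc,
      ← whisker_exchange_assoc]
    rw [associator_inv_naturality_left_assoc, ← comp_whiskerRight_assoc, heE]
    rw [comp_whiskerRight, comp_whiskerRight, Category.assoc, Category.assoc, MonObj.one_mul M.X]
    simp only [id_whiskerLeft, Category.assoc, Iso.inv_hom_id_assoc]
    have coh1 : (λ_ (Cn.X ⊗ M.X)).inv ≫ (α_ (𝟙_ V) Cn.X M.X).inv ≫ ((λ_ Cn.X).hom ▷ M.X) =
        𝟙 _ := by monoidal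
    rw [reassoc_of% coh1, e₂, ← whisker_exchange_assoc]
    have coh2 : (β ▷ 𝟙_ V) ≫ (ρ_ M.X).hom = (ρ_ (E ⊗ Cn.X)).hom ≫ β := by monoidal
    rw [coh2, ← associator_inv_naturality_right_assoc,
      ← MonoidalCategory.whiskerLeft_comp_assoc, ComonObj.comul_counit Cn.X]
    monoidal
  · -- right unit
    apply inj
    rw [comp_whiskerRight, Category.assoc, hmE]
    have e₁' : (M.mon.one ▷ Cn.X) ≫ lam = (λ_ Cn.X).hom ≫ (ρ_ Cn.X).inv ≫ (Cn.X ◁ M.mon.one) := by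
      rw [Iso.inv_comp_eq] at e₁
      simpa using e₁
    have hb : (eE ▷ Cn.X) ≫ (E ◁ Cn.comon.comul) ≫ (α_ E Cn.X Cn.X).inv ≫ (β ▷ Cn.X) ≫ lam
        = (λ_ Cn.X).hom ≫ (ρ_ Cn.X).inv ≫ (Cn.X ◁ M.mon.one) := by
      rw [← whisker_exchange_assoc, associator_inv_naturality_left_assoc,
        ← comp_whiskerRight_assoc, heE, comp_whiskerRight, comp_whiskerRight,
        Category.assoc, Category.assoc, e₁']
      simp only [id_whiskerLeft, Category.assoc]
      have coh : (λ_ (Cn.X ⊗ Cn.X)).inv ≫ (α_ (𝟙_ V) Cn.X Cn.X).inv ≫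
          ((λ_ Cn.X).hom ▷ Cn.X) = 𝟙 _ := by monoidal
      rw [reassoc_of% coh, ComonObj.counit_comul_assoc Cn.X]
      simp
    -- main chain
    rw [associator_naturality_middle_assoc, ← MonoidalCategory.whiskerLeft_comp_assoc,
      ← MonoidalCategory.whiskerLeft_comp_assoc, ← MonoidalCategory.whiskerLeft_comp_assoc,
      ← MonoidalCategory.whiskerLeft_comp_assoc]
    simp only [Category.assoc]
    rw [hb]
    simp only [MonoidalCategory.whiskerLeft_comp, Category.assoc]
    rw [associator_inv_naturality_right_assoc, whisker_exchange_assoc, MonObj.mul_one M.X]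
    monoidal
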